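/- Let X be a proper geodesic metric space admitting a convex geodesic bicombing (as any maximal Gromov product space does). Fix o ∈ X and R > 0, let S = {x ∈ X : d(o,x) = R} be the sphere of radius R centered at o, and for a subset W ⊆ S let Cone_o(W) = {x ∈ X : some geodesic segment from o to x meets W}. If U and V are distinct connected components of S, then (p|q)_o ≤ R for all p ∈ Cone_o(U) and q ∈ Cone_o(V); in particular Cone_o(U) ∩ Cone_o(V) = ∅. Moreover, the set {x ∈ X : d(o,x) ≥ R} is the disjoint union of the sets Cone_o(U) as U ranges over the connected components of S. -/

import Mathlib

open Filter Topology Metric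
open scoped ENNReal

universe u v

/-- A semi-metric (separating function) on a compact metrizable space: continuous, symmetric,
nonnegative, and vanishing exactly on the diagonal. -/
def IsSemiMetric {Z : Type*} [TopologicalSpace Z] (ρ : Z → Z → ℝ) : Prop :=
  Continuous (Function.uncurry ρ) ∧ (∀ ξ η, ρ ξ η = ρ η ξ) ∧
    (∀ ξ η, 0 ≤ ρ ξ η) ∧ ∀ ξ η, ρ ξ η = 0 ↔ ξ = η

/-- An antipodal function: a semi-metric of diameter at most one such that every point has an
antipode at distance one. -/
def IsAntipodalFn {Z : Type*} [TopologicalSpace Z] (ρ : Z → Z → ℝ) : Prop :=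
  IsSemiMetric ρ ∧ (∀ ξ η, ρ ξ η ≤ 1) ∧ ∀ ξ, ∃ η, ρ ξ η = 1

/-- A geodesic segment from `x` to `y`, parametrized by arclength on `[0, dist x y]`. -/
def IsGeodesicSegment {X : Type*} [MetricSpace X] (γ : ℝ → X) (x y : X) : Prop :=
  γ 0 = x ∧ γ (dist x y) = y ∧
    ∀ s ∈ Set.Icc (0:ℝ) (dist x y), ∀ t ∈ Set.Icc (0:ℝ) (dist x y), dist (γ s) (γ t) = |s - t|

/-- A geodesic metric space: any two points are joined by a geodesic segment. -/
def IsGeodesicSpace (X : Type*) [MetricSpace X] : Prop :=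
  ∀ x y : X, ∃ γ : ℝ → X, IsGeodesicSegment γ x y

/-- Geodesic completeness: any geodesic segment extends to a bi-infinite geodesic. -/
def IsGeodesicallyComplete (X : Type*) [MetricSpace X] : Prop :=
  ∀ (x y : X) (γ : ℝ → X), IsGeodesicSegment γ x y →
    ∃ γ' : ℝ → X, (∀ s t : ℝ, dist (γ' s) (γ' t) = |s - t|) ∧
      ∀ s ∈ Set.Icc (0:ℝ) (dist x y), γ' s = γ s

/-- The Gromov product `(p|q)_o = (d(p,o) + d(q,o) − d(p,q))/2`. -/
noncomputable def gromovProd {X : Type*} [MetricSpace X] (o p q : X) : ℝ :=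
  (dist p o + dist q o - dist p q) / 2

/-- The cone over a subset `W` of the sphere of radius `R` about `o`: those points `x` such that
some geodesic segment from `o` to `x` meets `W`. -/
def coneAt {X : Type*} [MetricSpace X] (o : X) (W : Set X) : Set X :=
  {x | ∃ γ : ℝ → X, IsGeodesicSegment γ o x ∧ ∃ t ∈ Set.Icc (0:ℝ) (dist o x), γ t ∈ W}

/-- A geodesic bicombing: a choice, for each ordered pair `(x, y)`, of a constant-speed
parametrization on `[0,1]` of a geodesic from `x` to `y`. -/
def IsGeodesicBicombing {X : Type*} [MetricSpace X] (Γ : X → X → ℝ → X) : Prop :=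
  ∀ x y : X, Γ x y 0 = x ∧ Γ x y 1 = y ∧
    ∀ s t : ℝ, 0 ≤ s → s ≤ t → t ≤ 1 → dist (Γ x y s) (Γ x y t) = (t - s) * dist x y

/-- A convex geodesic bicombing: `t ↦ dist (Γ x y t) (Γ p q t)` is convex on `[0,1]`. -/
def IsConvexGeodesicBicombing {X : Type*} [MetricSpace X] (Γ : X → X → ℝ → X) : Prop :=
  IsGeodesicBicombing Γ ∧
    ∀ x y p q : X, ConvexOn ℝ (Set.Icc (0:ℝ) 1) (fun t => dist (Γ x y t) (Γ p q t))

section Aux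

variable {X : Type*} [MetricSpace X]

lemma geo_dist {γ : ℝ → X} {x y : X} (h : IsGeodesicSegment γ x y)
    {t : ℝ} (ht : t ∈ Set.Icc (0:ℝ) (dist x y)) : dist x (γ t) = t := by
  have h0 : (0:ℝ) ∈ Set.Icc (0:ℝ) (dist x y) := ⟨le_refl _, dist_nonneg⟩
  have h2 := h.2.2 0 h0 t ht
  rw [h.1] at h2
  rw [h2, abs_of_nonpos (by linarith [ht.1] : (0:ℝ) - t ≤ 0)]
  ring

lemma geo_contOn {γ : ℝ → X} {x y : X} (h : IsGeodesicSegment γ x y) :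
    ContinuousOn γ (Set.Icc 0 (dist x y)) := by
  have : LipschitzOnWith 1 γ (Set.Icc 0 (dist x y)) := by
    apply LipschitzOnWith.of_dist_le_mul
    intro s hs t ht
    rw [h.2.2 s hs t ht, Real.dist_eq]
    simp
  exact this.continuousOn

lemma bic_est {Γ : X → X → ℝ → X} (hΓ : IsConvexGeodesicBicombing Γ)
    (o z z' : X) {s t : ℝ} (hs : s ∈ Set.Icc (0:ℝ) 1) (ht : t ∈ Set.Icc (0:ℝ) 1) :
    dist (Γ o z s) (Γ o z' t) ≤ s * dist z z' + |s - t| * dist o z' := by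
  have hb := hΓ.1
  have h1 : dist (Γ o z s) (Γ o z' s) ≤ s * dist z z' := by
    have hc := hΓ.2 o z o z'
    have key := hc.2 (Set.mem_Icc.mpr ⟨le_refl (0:ℝ), zero_le_one⟩)
      (Set.mem_Icc.mpr ⟨zero_le_one, le_refl (1:ℝ)⟩)
      (by linarith [hs.2] : (0:ℝ) ≤ 1 - s) hs.1 (by ring)
    simp only [smul_eq_mul] at key
    have e0 : (1 - s) * 0 + s * 1 = s := by ring
    rw [e0] at key
    have f0 : dist (Γ o z 0) (Γ o z' 0) = 0 := by rw [(hb o z).1, (hb o z').1, dist_self]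
    have f1 : dist (Γ o z 1) (Γ o z' 1) = dist z z' := by rw [(hb o z).2.1, (hb o z').2.1]
    rw [f0, f1] at key
    linarith
  have h2 : dist (Γ o z' s) (Γ o z' t) = |s - t| * dist o z' := by
    rcases le_total s t with h | h
    · rw [(hb o z').2.2 s t hs.1 h ht.2, abs_of_nonpos (by linarith : s - t ≤ 0)]
      ring
    · rw [dist_comm, (hb o z').2.2 t s ht.1 h hs.2, abs_of_nonneg (by linarith : (0:ℝ) ≤ s - t)]
  calc dist (Γ o z s) (Γ o z' t)
      ≤ dist (Γ o z s) (Γ o z' s) + dist (Γ o z' s) (Γ o z' t) := dist_triangle _ _ _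
    _ ≤ s * dist z z' + |s - t| * dist o z' := by rw [h2]; linarith

noncomputable def Wmap (Γ : X → X → ℝ → X) (o : X) (R : ℝ) (z : X) : X :=
  Γ o z (R / dist o z)

lemma Wmap_dist {Γ : X → X → ℝ → X} (hΓ : IsGeodesicBicombing Γ) {o : X} {R : ℝ}
    (hR : 0 < R) {z : X} (hz : R ≤ dist o z) : dist o (Wmap Γ o R z) = R := by
  have hdz : 0 < dist o z := lt_of_lt_of_le hR hz
  have h := (hΓ o z).2.2 0 (R / dist o z) le_rfl (by positivity) ((div_le_one hdz).mpr hz)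
  rw [(hΓ o z).1] at h
  rw [Wmap, h]
  field_simp
  ring

lemma Wmap_self {Γ : X → X → ℝ → X} (hΓ : IsGeodesicBicombing Γ) {o : X} {R : ℝ}
    (hR : 0 < R) {z : X} (hz : dist o z = R) : Wmap Γ o R z = z := by
  rw [Wmap, hz, div_self hR.ne', (hΓ o z).2.1]

lemma Wmap_lip {Γ : X → X → ℝ → X} (hΓ : IsConvexGeodesicBicombing Γ) {o : X} {R : ℝ}
    (hR : 0 < R) {z z' : X} (hz : R ≤ dist o z) (hz' : R ≤ dist o z') :
    dist (Wmap Γ o R z) (Wmap Γ o R z') ≤ 2 * dist z z' := by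
  set a := dist o z with hA
  set b := dist o z' with hB
  have ha : 0 < a := lt_of_lt_of_le hR hz
  have hb : 0 < b := lt_of_lt_of_le hR hz'
  have hsa : R / a ∈ Set.Icc (0:ℝ) 1 := ⟨by positivity, (div_le_one ha).mpr hz⟩
  have hsb : R / b ∈ Set.Icc (0:ℝ) 1 := ⟨by positivity, (div_le_one hb).mpr hz'⟩
  have est := bic_est hΓ o z z' hsa hsb
  have e1 : R / a * dist z z' ≤ dist z z' := mul_le_of_le_one_left dist_nonneg hsa.2
  have key : |R / a - R / b| * b ≤ |b - a| := by
    have h1 : R / a - R / b = R * (b - a) / (a * b) := by field_simp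
    rw [h1, abs_div, abs_mul, abs_of_pos hR, abs_of_pos (mul_pos ha hb),
      div_mul_eq_mul_div, div_le_iff₀ (mul_pos ha hb)]
    nlinarith [mul_nonneg (mul_nonneg (sub_nonneg.mpr hz) (abs_nonneg (b - a))) hb.le]
  have h5 : |b - a| ≤ dist z z' := by
    have h6 := abs_dist_sub_le z' z o
    rw [dist_comm z' z] at h6
    rw [dist_comm o z'] at hB
    rw [dist_comm o z] at hA
    calc |b - a| = |dist z' o - dist z o| := by rw [hA, hB]
      _ ≤ dist z z' := h6
  calc dist (Wmap Γ o R z) (Wmap Γ o R z') ≤ R / a * dist z z' + |R/a - R/b| * b := est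
    _ ≤ 2 * dist z z' := by linarith

lemma Wmap_contOn {Γ : X → X → ℝ → X} (hΓ : IsConvexGeodesicBicombing Γ) {o : X} {R : ℝ}
    (hR : 0 < R) : ContinuousOn (Wmap Γ o R) {z : X | R ≤ dist o z} := by
  have : LipschitzOnWith 2 (Wmap Γ o R) {z : X | R ≤ dist o z} := by
    apply LipschitzOnWith.of_dist_le_mul
    intro z hz z' hz'
    have := Wmap_lip hΓ hR hz hz'
    push_cast
    linarith
  exact this.continuousOn

lemma joinedIn_of_icc {S : Set X} {f : ℝ → X} {x y : X}
    (hf : ContinuousOn f (Set.Icc 0 1)) (h0 : f 0 = x) (h1 : f 1 = y)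
    (hmem : ∀ t ∈ Set.Icc (0:ℝ) 1, f t ∈ S) : JoinedIn S x y := by
  refine ⟨⟨⟨fun t => f t, ?_⟩, ?_, ?_⟩, fun t => hmem t t.2⟩
  · exact hf.comp_continuous continuous_subtype_val fun t => t.2
  · simpa using h0
  · simpa using h1

end Aux
section Legs

variable {X : Type*} [MetricSpace X]

lemma joined_leg {Γ : X → X → ℝ → X} (hΓ : IsConvexGeodesicBicombing Γ)
    (o : X) {R : ℝ} (hR : 0 < R) {S : Set X} (hS : S = {x : X | dist o x = R})
    {γ : ℝ → X} {p : X} (hγ : IsGeodesicSegment γ o p) (hRp : R ≤ dist o p) :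
    JoinedIn S (γ R) (Wmap Γ o R p) := by
  set D := dist o p with hD
  have harg : ∀ r ∈ Set.Icc (0:ℝ) 1, R + r * (D - R) ∈ Set.Icc R D := by
    intro r hr
    constructor
    · nlinarith [hr.1, hr.2]
    · nlinarith [hr.1, hr.2]
  have hsub : Set.Icc R D ⊆ Set.Icc 0 D := Set.Icc_subset_Icc hR.le le_rfl
  have hdist : ∀ r ∈ Set.Icc (0:ℝ) 1, dist o (γ (R + r * (D - R))) = R + r * (D - R) := by
    intro r hr
    exact geo_dist hγ (hsub (harg r hr))
  apply joinedIn_of_icc (f := fun r => Wmap Γ o R (γ (R + r * (D - R))))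
  · have hγc : ContinuousOn γ (Set.Icc 0 D) := geo_contOn hγ
    have haff : Continuous fun r : ℝ => R + r * (D - R) := by continuity
    refine (Wmap_contOn hΓ hR).comp
      (hγc.comp haff.continuousOn (fun r hr => hsub (harg r hr))) ?_
    intro r hr
    simp only [Set.mem_setOf_eq, Function.comp]
    rw [hdist r hr]
    exact (harg r hr).1
  · have e : R + 0 * (D - R) = R := by ring
    rw [e]
    exact Wmap_self hΓ.1 hR (geo_dist hγ ⟨hR.le, hRp⟩)
  · have e : R + 1 * (D - R) = D := by ring
    rw [e, hγ.2.1]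
  · intro r hr
    rw [hS]
    have hge : R ≤ dist o (γ (R + r * (D - R))) := by
      rw [hdist r hr]; exact (harg r hr).1
    exact Wmap_dist hΓ.1 hR hge

lemma joined_mid {Γ : X → X → ℝ → X} (hΓ : IsConvexGeodesicBicombing Γ)
    (o : X) {R : ℝ} (hR : 0 < R) {S : Set X} (hS : S = {x : X | dist o x = R})
    {p q : X} (hpq : R ≤ gromovProd o p q) :
    JoinedIn S (Wmap Γ o R p) (Wmap Γ o R q) := by
  have hb := hΓ.1
  have hmid : ∀ r ∈ Set.Icc (0:ℝ) 1, R ≤ dist o (Γ p q r) := by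
    intro r hr
    have d1 : dist p (Γ p q r) = r * dist p q := by
      have h := (hb p q).2.2 0 r le_rfl hr.1 hr.2
      rw [(hb p q).1] at h
      rw [h]; ring
    have d2 : dist (Γ p q r) q = (1 - r) * dist p q := by
      have h := (hb p q).2.2 r 1 hr.1 hr.2 le_rfl
      rw [(hb p q).2.1] at h
      rw [h]
    have t1 : dist p o ≤ dist p (Γ p q r) + dist (Γ p q r) o := dist_triangle _ _ _
    have t2 : dist q o ≤ dist q (Γ p q r) + dist (Γ p q r) o := dist_triangle _ _ _
    have e2 : dist q (Γ p q r) = (1 - r) * dist p q := by rw [dist_comm]; exact d2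
    have e3 : dist o (Γ p q r) = dist (Γ p q r) o := dist_comm _ _
    have hg : gromovProd o p q = (dist p o + dist q o - dist p q) / 2 := rfl
    rw [hg] at hpq
    rw [e3]
    linarith
  apply joinedIn_of_icc (f := fun r => Wmap Γ o R (Γ p q r))
  · have hL : LipschitzOnWith (dist p q).toNNReal (Γ p q) (Set.Icc 0 1) := by
      apply LipschitzOnWith.of_dist_le_mul
      intro s hs t ht
      rw [Real.coe_toNNReal _ dist_nonneg, Real.dist_eq]
      rcases le_total s t with h | h
      · rw [(hb p q).2.2 s t hs.1 h ht.2, abs_of_nonpos (by linarith : s - t ≤ 0)]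
        nlinarith [dist_nonneg (x := p) (y := q)]
      · rw [dist_comm, (hb p q).2.2 t s ht.1 h hs.2,
          abs_of_nonneg (by linarith : (0:ℝ) ≤ s - t)]
        nlinarith [dist_nonneg (x := p) (y := q)]
    exact (Wmap_contOn hΓ hR).comp hL.continuousOn (fun r hr => hmid r hr)
  · show Wmap Γ o R (Γ p q 0) = Wmap Γ o R p
    rw [(hb p q).1]
  · show Wmap Γ o R (Γ p q 1) = Wmap Γ o R q
    rw [(hb p q).2.1]
  · intro r hr
    rw [hS]
    exact Wmap_dist hb hR (hmid r hr)

lemma cone_facts {o : X} {R : ℝ} {S W : Set X} (hS : S = {x : X | dist o x = R})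
    (hWS : W ⊆ S) {x : X} (hx : x ∈ coneAt o W) :
    R ≤ dist o x ∧ (dist o x = R → x ∈ W) := by
  obtain ⟨γ, hγ, t, ht, hu⟩ := hx
  have huS : γ t ∈ S := hWS hu
  rw [hS] at huS
  have hgd : dist o (γ t) = t := geo_dist hγ ht
  have htR : t = R := by rw [← hgd]; exact huS
  constructor
  · exact htR ▸ ht.2
  · intro hxR
    have hx2 : γ (dist o x) = x := hγ.2.1
    have : x = γ t := by rw [← hx2, hxR, htR]
    rw [this]
    exact hu

lemma cones_joined {Γ : X → X → ℝ → X} (hΓ : IsConvexGeodesicBicombing Γ)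
    (o : X) {R : ℝ} (hR : 0 < R) {S : Set X} (hS : S = {x : X | dist o x = R})
    {W₁ W₂ : Set X} {a b : X} (ha : a ∈ S) (hb : b ∈ S)
    (hW₁ : W₁ = connectedComponentIn S a) (hW₂ : W₂ = connectedComponentIn S b)
    {p q : X} (hp : p ∈ coneAt o W₁) (hq : q ∈ coneAt o W₂)
    (hgt : R ≤ gromovProd o p q) : W₁ = W₂ := by
  obtain ⟨γ, hγ, t, ht, hu⟩ := hp
  obtain ⟨γ', hγ', t', ht', hv⟩ := hq
  have hW₁S : W₁ ⊆ S := hW₁ ▸ connectedComponentIn_subset S a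
  have hW₂S : W₂ ⊆ S := hW₂ ▸ connectedComponentIn_subset S b
  have hdu : dist o (γ t) = R := by have := hW₁S hu; rwa [hS] at this
  have hdv : dist o (γ' t') = R := by have := hW₂S hv; rwa [hS] at this
  have htR : t = R := by rw [← geo_dist hγ ht]; exact hdu
  have htR' : t' = R := by rw [← geo_dist hγ' ht']; exact hdv
  have hRp : R ≤ dist o p := htR ▸ ht.2
  have hRq : R ≤ dist o q := htR' ▸ ht'.2
  have j1 : JoinedIn S (γ R) (Wmap Γ o R p) := joined_leg hΓ o hR hS hγ hRp
  have j2 : JoinedIn S (Wmap Γ o R p) (Wmap Γ o R q) := joined_mid hΓ o hR hS hgt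
  have j3 : JoinedIn S (γ' R) (Wmap Γ o R q) := joined_leg hΓ o hR hS hγ' hRq
  have j : JoinedIn S (γ R) (γ' R) := (j1.trans j2).trans j3.symm
  obtain ⟨P, hP⟩ := j
  have himg : IsPreconnected (Set.range P) := (isConnected_range P.continuous).isPreconnected
  have hsub : Set.range P ⊆ S := by rintro _ ⟨r, rfl⟩; exact hP r
  have hmemu : γ R ∈ Set.range P := ⟨0, P.source⟩
  have hmemv : γ' R ∈ Set.range P := ⟨1, P.target⟩
  have hvin : γ' R ∈ connectedComponentIn S (γ R) :=
    himg.subset_connectedComponentIn hmemu hsub hmemv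
  have huW : γ R ∈ W₁ := htR ▸ hu
  have hvW : γ' R ∈ W₂ := htR' ▸ hv
  rw [hW₁] at huW
  rw [hW₂] at hvW
  have e1 : W₁ = connectedComponentIn S (γ R) := by
    rw [hW₁]; exact connectedComponentIn_eq huW
  have e2 : W₂ = connectedComponentIn S (γ' R) := by
    rw [hW₂]; exact connectedComponentIn_eq hvW
  rw [e1, e2]
  exact connectedComponentIn_eq hvin

end Legs

/-- Let `X` be a proper geodesic metric space admitting a convex geodesic
bicombing, `o ∈ X`, `R > 0`, and `S` the sphere of radius `R` about `o`. If `U` and `V` are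
distinct connected components of `S`, then `(p|q)_o ≤ R` for all `p ∈ Cone_o(U)` and
`q ∈ Cone_o(V)`; in particular the two cones are disjoint. Moreover
`{x | d(o,x) ≥ R}` is the disjoint union of the cones over the connected components of `S`. -/
theorem cones_over_sphere_components
    {X : Type u} [MetricSpace X] [ProperSpace X]
    (hgeo : IsGeodesicSpace X)
    (hbic : ∃ Γ : X → X → ℝ → X, IsConvexGeodesicBicombing Γ)
    (o : X) (R : ℝ) (hR : 0 < R)
    (S : Set X) (hS : S = {x : X | dist o x = R})
    (p₀ q₀ : X) (hp₀ : p₀ ∈ S) (hq₀ : q₀ ∈ S)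
    (U V : Set X) (hU : U = connectedComponentIn S p₀) (hV : V = connectedComponentIn S q₀)
    (hUV : U ≠ V) :
    (∀ p ∈ coneAt o U, ∀ q ∈ coneAt o V, gromovProd o p q ≤ R) ∧
    coneAt o U ∩ coneAt o V = ∅ ∧
    ({x : X | R ≤ dist o x} = ⋃ s ∈ S, coneAt o (connectedComponentIn S s)) ∧
    (∀ s ∈ S, ∀ t ∈ S, connectedComponentIn S s ≠ connectedComponentIn S t →
      coneAt o (connectedComponentIn S s) ∩ coneAt o (connectedComponentIn S t) = ∅) := by
  obtain ⟨Γ, hΓ⟩ := hbic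
  have hSsub : ∀ c : X, connectedComponentIn S c ⊆ S := fun c => connectedComponentIn_subset S c
  have part1 : ∀ p ∈ coneAt o U, ∀ q ∈ coneAt o V, gromovProd o p q ≤ R := by
    intro p hp q hq
    by_contra h
    push_neg at h
    exact hUV (cones_joined hΓ o hR hS hp₀ hq₀ hU hV hp hq h.le)
  have keydisj : ∀ a b : X, a ∈ S → b ∈ S →
      connectedComponentIn S a ≠ connectedComponentIn S b →
      coneAt o (connectedComponentIn S a) ∩ coneAt o (connectedComponentIn S b) = ∅ := by
    intro a b haS hbS hne
    ext x
    simp only [Set.mem_inter_iff, Set.mem_empty_iff_false, iff_false, not_and]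
    intro hxa hxb
    apply hne
    by_cases hle : R ≤ gromovProd o x x
    · exact cones_joined hΓ o hR hS haS hbS rfl rfl hxa hxb hle
    · exfalso
      have h1 := (cone_facts hS (hSsub a) hxa).1
      have h2 : gromovProd o x x = dist x o := by
        unfold gromovProd
        rw [dist_self]
        ring
      rw [h2, dist_comm] at hle
      exact hle h1
  have part2 : coneAt o U ∩ coneAt o V = ∅ := by
    rw [hU, hV]
    apply keydisj p₀ q₀ hp₀ hq₀
    rw [← hU, ← hV]
    exact hUV
  refine ⟨part1, part2, ?_, fun s hs t ht hne => keydisj s t hs ht hne⟩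
  ext x
  simp only [Set.mem_setOf_eq, Set.mem_iUnion]
  constructor
  · intro hx
    obtain ⟨γ, hγ⟩ := hgeo o x
    have hmem : γ R ∈ S := by
      rw [hS]
      exact geo_dist hγ ⟨hR.le, hx⟩
    exact ⟨γ R, hmem, γ, hγ, R, ⟨hR.le, hx⟩, mem_connectedComponentIn hmem⟩
  · rintro ⟨s, hsS, hx⟩
    exact (cone_facts hS (hSsub s) hx).1
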